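/- Let v1 and v2 be XOS valuations on [m], let k be a positive integer, and let (b_1,…,b_k) be a (k,1/2)-sketch of v1. Then (1/k) ∑_{j=1}^k SW*(b_j, v2) ≥ (3/4 − 1/k) · SW*(v1, v2); in particular max_{j ∈ [k]} SW*(b_j, v2) ≥ (3/4 − 1/k) · SW*(v1, v2), so the two-round deterministic protocol in which Alice sends her (k,1/2)-sketch and Bob reports the best allocation against one of its clauses is a (3/4 − 1/k)-approximation to the 2-party XOS allocation problem and the 2-party XOS decision problem. -/

import Mathlib

open Finset MeasureTheory

/-- Value of an additive valuation `a : Fin m → ℝ` on a bundle `S`. -/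
noncomputable def aval {m : ℕ} (a : Fin m → ℝ) (S : Finset (Fin m)) : ℝ := ∑ i ∈ S, a i

/-- Value of an XOS valuation with (nonempty list of) additive clauses `C` on a bundle `S`. -/
noncomputable def xosVal {m t : ℕ} (C : Fin (t + 1) → Fin m → ℝ) (S : Finset (Fin m)) : ℝ :=
  Finset.univ.sup' Finset.univ_nonempty fun j => aval (C j) S

/-- Optimal welfare between two (ℝ-valued) valuations on `[m]`. -/
noncomputable def swR {m : ℕ} (v1 v2 : Finset (Fin m) → ℝ) : ℝ :=
  Finset.univ.sup' Finset.univ_nonempty fun S : Finset (Fin m) => v1 S + v2 Sᶜ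

/-- `x_{i,u}`: the fraction of the `k` sketch clauses `b` whose value for item `i` is `≥ u`. -/
noncomputable def rX {m k : ℕ} (b : Fin k → Fin m → ℝ) (i : Fin m) (u : ℝ) : ℝ :=
  (∑ j, if u ≤ b j i then (1 : ℝ) else 0) / k

/-- The objective `∑ i ∫₀^∞ (x_{i,u} − α x_{i,u}²) du` that a `(k,α)`-sketch of an XOS
valuation maximizes. -/
noncomputable def rObj {m k : ℕ} (α : ℝ) (b : Fin k → Fin m → ℝ) : ℝ :=
  ∑ i, ∫ u in Set.Ioi (0 : ℝ), (rX b i u - α * (rX b i u) ^ 2)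

/-- `(C (σ 1),…,C (σ k))` is a `(k,α)`-sketch of the XOS valuation with clauses `C`. -/
def IsSketchR {m t k : ℕ} (α : ℝ) (C : Fin (t + 1) → Fin m → ℝ)
    (σ : Fin k → Fin (t + 1)) : Prop :=
  ∀ τ : Fin k → Fin (t + 1), rObj α (fun j => C (τ j)) ≤ rObj α (fun j => C (σ j))

section Stmt11Aux

noncomputable def bI (v u : ℝ) : ℝ := if u ≤ v then 1 else 0

lemma bI_nonneg (v u : ℝ) : 0 ≤ bI v u := by unfold bI; split <;> norm_num

lemma bI_mul (v w u : ℝ) : bI v u * bI w u = bI (min v w) u := by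
  unfold bI
  by_cases h1 : u ≤ v <;> by_cases h2 : u ≤ w <;> simp [h1, h2, le_min_iff]

lemma bI_integrableOn (v : ℝ) : IntegrableOn (bI v) (Set.Ioi 0) := by
  have h : IntegrableOn ((Set.Ioc (0:ℝ) v).indicator (fun _ => (1:ℝ))) (Set.Ioi 0) := by
    apply Integrable.integrableOn
    rw [integrable_indicator_iff measurableSet_Ioc]
    refine (integrableOn_const_iff).mpr (Or.inr ?_)
    simp [Real.volume_Ioc]
  refine h.congr_fun (fun u hu => ?_) measurableSet_Ioi
  simp only [Set.indicator, Set.mem_Ioc, bI]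
  rw [Set.mem_Ioi] at hu
  by_cases h2 : u ≤ v <;> simp [h2, hu]

lemma bI_integral (v : ℝ) (hv : 0 ≤ v) : ∫ u in Set.Ioi (0:ℝ), bI v u = v := by
  have h1 : ∫ u in Set.Ioi (0:ℝ), bI v u
      = ∫ u in Set.Ioi (0:ℝ), (Set.Ioc (0:ℝ) v).indicator (fun _ => (1:ℝ)) u := by
    refine setIntegral_congr_fun measurableSet_Ioi (fun u hu => ?_)
    rw [Set.mem_Ioi] at hu
    simp only [Set.indicator, Set.mem_Ioc, bI]
    by_cases h2 : u ≤ v <;> simp [h2, hu]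
  rw [h1, setIntegral_indicator measurableSet_Ioc]
  have h2 : Set.Ioi (0:ℝ) ∩ Set.Ioc (0:ℝ) v = Set.Ioc (0:ℝ) v :=
    Set.inter_eq_self_of_subset_right Set.Ioc_subset_Ioi_self
  rw [h2]
  simp [Real.volume_Ioc, ENNReal.toReal_ofReal hv, hv]

lemma sum_bI_integrableOn {ι : Type*} (s : Finset ι) (v : ι → ℝ) :
    IntegrableOn (fun u => ∑ i ∈ s, bI (v i) u) (Set.Ioi 0) :=
  integrable_finset_sum s (fun i _ => bI_integrableOn (v i))

lemma sum_bI_integral {ι : Type*} (s : Finset ι) (v : ι → ℝ) (hv : ∀ i ∈ s, 0 ≤ v i) :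
    ∫ u in Set.Ioi (0:ℝ), ∑ i ∈ s, bI (v i) u = ∑ i ∈ s, v i := by
  rw [integral_finset_sum s (fun i _ => bI_integrableOn (v i))]
  exact Finset.sum_congr rfl (fun i hi => bI_integral _ (hv i hi))

lemma dsum_bI_eq {k : ℕ} (y : Fin k → ℝ) :
    (fun u => ∑ j, ∑ l, bI (min (y j) (y l)) u)
      = fun u => ∑ p ∈ (univ ×ˢ univ : Finset (Fin k × Fin k)), bI (min (y p.1) (y p.2)) u := by
  funext u; rw [Finset.sum_product]

lemma dsum_bI_integrableOn {k : ℕ} (y : Fin k → ℝ) :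
    IntegrableOn (fun u => ∑ j, ∑ l, bI (min (y j) (y l)) u) (Set.Ioi 0) := by
  rw [dsum_bI_eq]; exact sum_bI_integrableOn _ _

lemma dsum_bI_integral {k : ℕ} (y : Fin k → ℝ) (hy : ∀ j, 0 ≤ y j) :
    ∫ u in Set.Ioi (0:ℝ), ∑ j, ∑ l, bI (min (y j) (y l)) u = ∑ j, ∑ l, min (y j) (y l) := by
  rw [dsum_bI_eq, sum_bI_integral _ _ (fun p _ => le_min (hy p.1) (hy p.2)), Finset.sum_product]

lemma star_alg {k : ℕ} (hk : 0 < k) (a c : ℝ) (ha : 0 ≤ a) (hc : 0 ≤ c)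
    (y : Fin k → ℝ) (hy : ∀ j, 0 ≤ y j) :
    (3/4) * max a c ≤ (1/(k:ℝ)) * ∑ j, max (y j) c +
      (a - (1/(k:ℝ)) * ∑ j, min a (y j) - (1/(k:ℝ)) * ∑ j, y j
        + (1/(k:ℝ)^2) * ∑ j, ∑ l, min (y j) (y l)) := by
  have hK0 : (0:ℝ) < (k:ℝ) := by exact_mod_cast hk
  have hKne : (k:ℝ) ≠ 0 := ne_of_gt hK0
  set K : ℝ := (k:ℝ) with hKdef
  set h : ℝ → ℝ := fun u =>
    (bI c u + bI a u + (1/K^2) * ∑ j, ∑ l, bI (min (y j) (y l)) u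
        + (3/4) * bI (min a c) u)
      - ((1/K) * ∑ j, bI (min c (y j)) u + (1/K) * ∑ j, bI (min a (y j)) u
        + (3/4) * bI a u + (3/4) * bI c u) with hh
  have hpt : ∀ u : ℝ, 0 ≤ h u := by
    intro u
    have e1 : ∑ j, bI (min c (y j)) u = bI c u * ∑ j, bI (y j) u := by
      rw [Finset.mul_sum]; exact Finset.sum_congr rfl fun j _ => (bI_mul c (y j) u).symm
    have e2 : ∑ j, bI (min a (y j)) u = bI a u * ∑ j, bI (y j) u := by
      rw [Finset.mul_sum]; exact Finset.sum_congr rfl fun j _ => (bI_mul a (y j) u).symm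
    have e3 : ∑ j, ∑ l, bI (min (y j) (y l)) u = (∑ j, bI (y j) u) * (∑ l, bI (y l) u) := by
      rw [Finset.sum_mul_sum]
      exact Finset.sum_congr rfl fun j _ => Finset.sum_congr rfl fun l _ => (bI_mul _ _ u).symm
    have e4 : bI (min a c) u = bI a u * bI c u := (bI_mul a c u).symm
    have hXnn : 0 ≤ (∑ j, bI (y j) u) := Finset.sum_nonneg fun j _ => bI_nonneg _ u
    set X : ℝ := ∑ j, bI (y j) u
    have hx : 0 ≤ (1/K) * X := by positivity
    set x : ℝ := (1/K) * X with hxdef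
    have hx2 : (1/K^2) * (X * X) = x^2 := by rw [hxdef]; ring
    rw [hh]
    simp only [e1, e2, e3, e4, hx2]
    by_cases h1 : u ≤ a <;> by_cases h2 : u ≤ c <;>
      simp only [bI, h1, h2, if_true, if_false] <;>
      [ (nlinarith [sq_nonneg (x-1)]) ;
        (nlinarith [sq_nonneg (x - 1/2)]) ;
        (nlinarith [sq_nonneg (x - 1/2)]) ;
        (nlinarith [sq_nonneg x]) ]
  have hnn : 0 ≤ ∫ u in Set.Ioi (0:ℝ), h u :=
    setIntegral_nonneg measurableSet_Ioi (fun u _ => hpt u)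
  have I1 := bI_integrableOn c
  have I2 := bI_integrableOn a
  have I3 := sum_bI_integrableOn (univ : Finset (Fin k)) (fun j => min c (y j))
  have I4 := sum_bI_integrableOn (univ : Finset (Fin k)) (fun j => min a (y j))
  have I5 := dsum_bI_integrableOn y
  have I6 := bI_integrableOn (min a c)
  have J1 : IntegrableOn (fun u => bI c u + bI a u
      + (1/K^2) * ∑ j, ∑ l, bI (min (y j) (y l)) u + (3/4) * bI (min a c) u) (Set.Ioi 0) :=
    ((I1.add I2).add (I5.const_mul _)).add (I6.const_mul _)
  have J2 : IntegrableOn (fun u => (1/K) * ∑ j, bI (min c (y j)) u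
      + (1/K) * ∑ j, bI (min a (y j)) u + (3/4) * bI a u + (3/4) * bI c u) (Set.Ioi 0) :=
    (((I3.const_mul _).add (I4.const_mul _)).add (I2.const_mul _)).add (I1.const_mul _)
  have J3 : IntegrableOn (fun u => bI c u + bI a u
      + (1/K^2) * ∑ j, ∑ l, bI (min (y j) (y l)) u) (Set.Ioi 0) :=
    (I1.add I2).add (I5.const_mul _)
  have J4 : IntegrableOn (fun u => bI c u + bI a u) (Set.Ioi 0) := I1.add I2
  have J5 : IntegrableOn (fun u => (1/K) * ∑ j, bI (min c (y j)) u
      + (1/K) * ∑ j, bI (min a (y j)) u + (3/4) * bI a u) (Set.Ioi 0) :=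
    ((I3.const_mul _).add (I4.const_mul _)).add (I2.const_mul _)
  have J6 : IntegrableOn (fun u => (1/K) * ∑ j, bI (min c (y j)) u
      + (1/K) * ∑ j, bI (min a (y j)) u) (Set.Ioi 0) :=
    (I3.const_mul _).add (I4.const_mul _)
  have hval : ∫ u in Set.Ioi (0:ℝ), h u =
      (c + a + (1/K^2) * ∑ j, ∑ l, min (y j) (y l) + (3/4) * min a c)
      - ((1/K) * ∑ j, min c (y j) + (1/K) * ∑ j, min a (y j) + (3/4) * a + (3/4) * c) := by
    rw [hh]
    rw [integral_sub J1 J2,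
      integral_add J3 (I6.const_mul _),
      integral_add J4 (I5.const_mul _),
      integral_add I1 I2,
      integral_add J5 (I1.const_mul _),
      integral_add J6 (I2.const_mul _),
      integral_add (I3.const_mul _) (I4.const_mul _)]
    simp only [MeasureTheory.integral_const_mul]
    rw [bI_integral c hc, bI_integral a ha, bI_integral _ (le_min ha hc),
      sum_bI_integral _ _ (fun j _ => le_min hc (hy j)),
      sum_bI_integral _ _ (fun j _ => le_min ha (hy j)),
      dsum_bI_integral y hy]
  have key : (0:ℝ) ≤ (c + a + (1/K^2) * ∑ j, ∑ l, min (y j) (y l) + (3/4) * min a c)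
      - ((1/K) * ∑ j, min c (y j) + (1/K) * ∑ j, min a (y j) + (3/4) * a + (3/4) * c) :=
    hval ▸ hnn
  have hmaxac : max a c = a + c - min a c := by
    have := max_add_min a c; linarith
  have hmaxsum : ∑ j, max (y j) c = ∑ j, y j + K * c - ∑ j, min c (y j) := by
    have h1 : ∀ j : Fin k, max (y j) c = y j + c - min c (y j) := fun j => by
      rw [min_comm]; have := max_add_min (y j) c; linarith
    rw [Finset.sum_congr rfl (fun j _ => h1 j), Finset.sum_sub_distrib, Finset.sum_add_distrib]
    simp [Finset.card_univ, mul_comm, hKdef]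
  have hexp : (1/K) * (∑ j, y j + K * c - ∑ j, min c (y j))
      = (1/K) * ∑ j, y j + c - (1/K) * ∑ j, min c (y j) := by
    field_simp
  rw [hmaxac, hmaxsum]
  linarith [key, hexp]

lemma rObj_eq {m k : ℕ} (b : Fin k → Fin m → ℝ) (hb : ∀ j i, 0 ≤ b j i) :
    rObj (1/2) b = ∑ i, ((1/(k:ℝ)) * ∑ j, b j i
      - (1/(2*(k:ℝ)^2)) * ∑ j, ∑ l, min (b j i) (b l i)) := by
  unfold rObj
  refine Finset.sum_congr rfl (fun i _ => ?_)
  have hrX : ∀ u, rX b i u = (1/(k:ℝ)) * ∑ j, bI (b j i) u := by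
    intro u; unfold rX bI; ring
  have hint : (fun u => rX b i u - 1/2 * (rX b i u)^2)
      = fun u => (1/(k:ℝ)) * ∑ j, bI (b j i) u
        - (1/(2*(k:ℝ)^2)) * ∑ j, ∑ l, bI (min (b j i) (b l i)) u := by
    funext u
    have hsq : (∑ j, bI (b j i) u) * (∑ l, bI (b l i) u)
        = ∑ j, ∑ l, bI (min (b j i) (b l i)) u := by
      rw [Finset.sum_mul_sum]
      exact Finset.sum_congr rfl fun j _ => Finset.sum_congr rfl fun l _ => bI_mul _ _ u
    rw [hrX u, ← hsq]
    ring
  rw [hint]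
  rw [integral_sub ((sum_bI_integrableOn univ (fun j => b j i)).const_mul _)
    ((dsum_bI_integrableOn (fun j => b j i)).const_mul _)]
  simp only [MeasureTheory.integral_const_mul]
  rw [sum_bI_integral _ _ (fun j _ => hb j i), dsum_bI_integral _ (fun j => hb j i)]

lemma comp_update {k : ℕ} (w : Fin k → ℝ) (j₀ : Fin k) (A : ℝ) (g : ℝ → ℝ) :
    ∑ j, g (Function.update w j₀ A j) = g A + ∑ j ∈ univ.erase j₀, g (w j) := by
  rw [← Finset.add_sum_erase _ _ (mem_univ j₀), Function.update_self]
  congr 1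
  exact Finset.sum_congr rfl fun j hj => by
    rw [Function.update_of_ne (Finset.ne_of_mem_erase hj)]

lemma sum_update_lin {k : ℕ} (w : Fin k → ℝ) (A : ℝ) :
    ∑ j₀, ∑ j, Function.update w j₀ A j = ((k:ℝ) - 1) * ∑ j, w j + (k:ℝ) * A := by
  have h1 : ∀ j₀ : Fin k, ∑ j, Function.update w j₀ A j = A + (∑ j, w j - w j₀) := by
    intro j₀
    have := comp_update w j₀ A (fun t => t)
    rw [this, Finset.sum_erase_eq_sub (mem_univ j₀)]
  rw [Finset.sum_congr rfl (fun j₀ _ => h1 j₀), Finset.sum_add_distrib, Finset.sum_sub_distrib]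
  simp [Finset.card_univ, Finset.sum_const]
  ring

lemma double_update {k : ℕ} (w : Fin k → ℝ) (A : ℝ) (j₀ : Fin k) :
    ∑ j, ∑ l, min (Function.update w j₀ A j) (Function.update w j₀ A l)
    = A + 2 * (∑ j, min A (w j) - min A (w j₀))
      + (∑ j, ∑ l, min (w j) (w l) - 2 * ∑ l, min (w j₀) (w l) + w j₀) := by
  have houter := comp_update w j₀ A (fun t => ∑ l, min t (Function.update w j₀ A l))
  have hinner : ∀ t : ℝ, ∑ l, min t (Function.update w j₀ A l)
      = min t A + ∑ l ∈ univ.erase j₀, min t (w l) :=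
    fun t => comp_update w j₀ A (fun s => min t s)
  rw [houter, hinner A, Finset.sum_congr rfl (fun j (_ : j ∈ univ.erase j₀) => hinner (w j)),
    Finset.sum_add_distrib]
  have hP : ∑ l ∈ univ.erase j₀, min A (w l) = ∑ j, min A (w j) - min A (w j₀) :=
    Finset.sum_erase_eq_sub (mem_univ j₀)
  have hP2 : ∑ j ∈ univ.erase j₀, min (w j) A = ∑ j, min A (w j) - min A (w j₀) := by
    rw [Finset.sum_congr rfl (fun j (_ : j ∈ univ.erase j₀) => min_comm (w j) A)]
    exact hP
  have hQ : ∑ j ∈ univ.erase j₀, ∑ l ∈ univ.erase j₀, min (w j) (w l)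
      = ∑ j, ∑ l, min (w j) (w l) - 2 * ∑ l, min (w j₀) (w l) + w j₀ := by
    have hrow : ∀ j : Fin k, ∑ l ∈ univ.erase j₀, min (w j) (w l)
        = ∑ l, min (w j) (w l) - min (w j) (w j₀) :=
      fun j => Finset.sum_erase_eq_sub (mem_univ j₀)
    rw [Finset.sum_congr rfl (fun j (_ : j ∈ univ.erase j₀) => hrow j),
      Finset.sum_sub_distrib, Finset.sum_erase_eq_sub (mem_univ j₀),
      Finset.sum_erase_eq_sub (mem_univ j₀)]
    have hcol : ∑ j, min (w j) (w j₀) = ∑ l, min (w j₀) (w l) :=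
      Finset.sum_congr rfl (fun j _ => min_comm _ _)
    rw [hcol, min_self]
    ring
  rw [hP, hP2, hQ, min_self]
  ring

lemma sum_double_update {k : ℕ} (w : Fin k → ℝ) (A : ℝ) :
    ∑ j₀, ∑ j, ∑ l, min (Function.update w j₀ A j) (Function.update w j₀ A l)
    = (k:ℝ) * A + 2 * ((k:ℝ) - 1) * ∑ j, min A (w j)
      + ((k:ℝ) - 2) * ∑ j, ∑ l, min (w j) (w l) + ∑ j, w j := by
  rw [Finset.sum_congr rfl (fun j₀ (_ : j₀ ∈ univ) => double_update w A j₀)]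
  simp only [Finset.sum_add_distrib, Finset.sum_sub_distrib, ← Finset.mul_sum, Finset.sum_const,
    Finset.card_univ, Fintype.card_fin, nsmul_eq_mul]
  ring

lemma aval_nonneg {m : ℕ} {a : Fin m → ℝ} (h : ∀ i, 0 ≤ a i) (S : Finset (Fin m)) :
    0 ≤ aval a S := Finset.sum_nonneg fun i _ => h i

lemma le_xosVal {m t : ℕ} (C : Fin (t + 1) → Fin m → ℝ) (j : Fin (t + 1)) (S : Finset (Fin m)) :
    aval (C j) S ≤ xosVal C S := by
  unfold xosVal; exact Finset.le_sup' (fun j => aval (C j) S) (mem_univ j)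

lemma xosVal_empty {m t : ℕ} (C : Fin (t + 1) → Fin m → ℝ) : xosVal C (∅ : Finset (Fin m)) = 0 := by
  unfold xosVal aval
  simp only [Finset.sum_empty]
  exact Finset.sup'_const Finset.univ_nonempty (0:ℝ)

lemma le_swR {m : ℕ} (v1 v2 : Finset (Fin m) → ℝ) (S : Finset (Fin m)) :
    v1 S + v2 Sᶜ ≤ swR v1 v2 := by
  unfold swR; exact Finset.le_sup' (fun S => v1 S + v2 Sᶜ) (mem_univ S)

lemma welfare_lb {m t2 : ℕ} (g : Fin m → ℝ) (C2 : Fin (t2 + 1) → Fin m → ℝ) (jc : Fin (t2 + 1)) :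
    ∑ i, max (g i) (C2 jc i) ≤ swR (aval g) (xosVal C2) := by
  classical
  set S₀ : Finset (Fin m) := Finset.univ.filter (fun i => C2 jc i ≤ g i) with hS₀
  have hsplit : ∑ i, max (g i) (C2 jc i)
      = ∑ i ∈ S₀, max (g i) (C2 jc i) + ∑ i ∈ S₀ᶜ, max (g i) (C2 jc i) :=
    (Finset.sum_add_sum_compl S₀ _).symm
  have h1 : ∑ i ∈ S₀, max (g i) (C2 jc i) = aval g S₀ :=
    Finset.sum_congr rfl fun i hi => max_eq_left (by simpa [hS₀] using (Finset.mem_filter.mp hi).2)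
  have h2 : ∑ i ∈ S₀ᶜ, max (g i) (C2 jc i) = aval (C2 jc) S₀ᶜ :=
    Finset.sum_congr rfl fun i hi => max_eq_right (by
      have := Finset.mem_compl.mp hi
      simp only [hS₀, Finset.mem_filter, Finset.mem_univ, true_and] at this
      linarith [lt_of_not_ge this])
  calc ∑ i, max (g i) (C2 jc i) = aval g S₀ + aval (C2 jc) S₀ᶜ := by rw [hsplit, h1, h2]
    _ ≤ aval g S₀ + xosVal C2 S₀ᶜ := by linarith [le_xosVal C2 jc S₀ᶜ]
    _ ≤ swR (aval g) (xosVal C2) := le_swR _ _ _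

end Stmt11Aux

/-- if `(b_1,…,b_k)` is a `(k,1/2)`-sketch of the XOS valuation `v1`, then
`(1/k) ∑_j SW*(b_j, v2) ≥ (3/4 − 1/k) · SW*(v1, v2)`; in particular some reported clause
`b_j` satisfies `SW*(b_j, v2) ≥ (3/4 − 1/k) · SW*(v1, v2)` (the two-round protocol
guarantee). -/
theorem stmt11 {m t1 t2 k : ℕ} (hk : 0 < k)
    (C1 : Fin (t1 + 1) → Fin m → ℝ) (C2 : Fin (t2 + 1) → Fin m → ℝ)
    (hC1 : ∀ j i, 0 ≤ C1 j i) (hC2 : ∀ j i, 0 ≤ C2 j i)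
    (σ : Fin k → Fin (t1 + 1)) (hσ : IsSketchR (1 / 2 : ℝ) C1 σ) :
    (1 / k : ℝ) * ∑ j, swR (aval (C1 (σ j))) (xosVal C2)
        ≥ (3 / 4 - 1 / k : ℝ) * swR (xosVal C1) (xosVal C2)
    ∧ ∃ j, swR (aval (C1 (σ j))) (xosVal C2)
        ≥ (3 / 4 - 1 / k : ℝ) * swR (xosVal C1) (xosVal C2) := by
  classical
  have hK0 : (0:ℝ) < (k:ℝ) := by exact_mod_cast hk
  have hKne : (k:ℝ) ≠ 0 := ne_of_gt hK0
  -- optimal allocation and witnessing clauses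
  obtain ⟨S, -, hS⟩ := Finset.exists_mem_eq_sup' (Finset.univ_nonempty)
    (fun S : Finset (Fin m) => xosVal C1 S + xosVal C2 Sᶜ)
  obtain ⟨ja, -, hja⟩ := Finset.exists_mem_eq_sup' (Finset.univ_nonempty)
    (fun j : Fin (t1 + 1) => aval (C1 j) S)
  obtain ⟨jc, -, hjc⟩ := Finset.exists_mem_eq_sup' (Finset.univ_nonempty)
    (fun j : Fin (t2 + 1) => aval (C2 j) Sᶜ)
  have hOPT : swR (xosVal C1) (xosVal C2) = aval (C1 ja) S + aval (C2 jc) Sᶜ := by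
    unfold swR
    rw [hS]
    unfold xosVal
    rw [hja, hjc]
  -- OPT is at most the per-item max of the two witnessing clauses
  have hOPT_le_max : swR (xosVal C1) (xosVal C2) ≤ ∑ i, max (C1 ja i) (C2 jc i) := by
    rw [hOPT]
    have h1 : aval (C1 ja) S ≤ ∑ i ∈ S, max (C1 ja i) (C2 jc i) :=
      Finset.sum_le_sum fun i _ => le_max_left _ _
    have h2 : aval (C2 jc) Sᶜ ≤ ∑ i ∈ Sᶜ, max (C1 ja i) (C2 jc i) :=
      Finset.sum_le_sum fun i _ => le_max_right _ _
    have h3 := Finset.sum_add_sum_compl S (fun i => max (C1 ja i) (C2 jc i))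
    have h4 : aval (C1 ja) S = ∑ i ∈ S, C1 ja i := rfl
    linarith
  -- OPT is nonnegative and dominates total clause values
  have hxc2univ : 0 ≤ xosVal C2 (∅ : Finset (Fin m))ᶜ :=
    le_trans (aval_nonneg (hC2 jc) _) (le_xosVal C2 jc _)
  have hOPT0 : 0 ≤ swR (xosVal C1) (xosVal C2) := by
    have h0 := le_swR (xosVal C1) (xosVal C2) ∅
    rw [xosVal_empty] at h0
    linarith
  have hsw_univ : ∀ g : Fin m → ℝ, (∀ i, 0 ≤ g i) → aval g Finset.univ ≤ xosVal C1 Finset.univ →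
      ∑ i, g i ≤ swR (xosVal C1) (xosVal C2) := by
    intro g hg hle
    have h0 := le_swR (xosVal C1) (xosVal C2) Finset.univ
    rw [Finset.compl_univ, xosVal_empty] at h0
    have : aval g Finset.univ = ∑ i, g i := rfl
    linarith
  have hA : ∑ i, C1 ja i ≤ swR (xosVal C1) (xosVal C2) :=
    hsw_univ (C1 ja) (hC1 ja) (le_xosVal C1 ja Finset.univ)
  have hY : ∀ j : Fin k, ∑ i, C1 (σ j) i ≤ swR (xosVal C1) (xosVal C2) :=
    fun j => hsw_univ (C1 (σ j)) (hC1 (σ j)) (le_xosVal C1 (σ j) Finset.univ)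
  -- welfare lower bound for each reported clause
  have hW : ∀ j : Fin k, ∑ i, max (C1 (σ j) i) (C2 jc i)
      ≤ swR (aval (C1 (σ j))) (xosVal C2) := fun j => welfare_lb (C1 (σ j)) C2 jc
  -- the per-item star inequality
  have hstar : ∀ i : Fin m, (3/4) * max (C1 ja i) (C2 jc i)
      ≤ (1/(k:ℝ)) * ∑ j, max (C1 (σ j) i) (C2 jc i) +
        (C1 ja i - (1/(k:ℝ)) * ∑ j, min (C1 ja i) (C1 (σ j) i)
          - (1/(k:ℝ)) * ∑ j, C1 (σ j) i
          + (1/(k:ℝ)^2) * ∑ j, ∑ l, min (C1 (σ j) i) (C1 (σ l) i)) :=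
    fun i => star_alg hk (C1 ja i) (C2 jc i) (hC1 ja i) (hC2 jc i)
      (fun j => C1 (σ j) i) (fun j => hC1 (σ j) i)
  -- swap optimality of the sketch
  have hupdnn : ∀ j₀ : Fin k, ∀ j i, 0 ≤ Function.update (fun j' => C1 (σ j')) j₀ (C1 ja) j i := by
    intro j₀ j i
    by_cases hj : j = j₀
    · subst hj; rw [Function.update_self]; exact hC1 ja i
    · rw [Function.update_of_ne hj]; exact hC1 (σ j) i
  have hclosed : ∀ j₀ : Fin k,
      ∑ i, ((1/(k:ℝ)) * ∑ j, Function.update (fun j' => C1 (σ j')) j₀ (C1 ja) j i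
        - (1/(2*(k:ℝ)^2)) * ∑ j, ∑ l,
            min (Function.update (fun j' => C1 (σ j')) j₀ (C1 ja) j i)
                (Function.update (fun j' => C1 (σ j')) j₀ (C1 ja) l i))
      ≤ ∑ i, ((1/(k:ℝ)) * ∑ j, C1 (σ j) i
        - (1/(2*(k:ℝ)^2)) * ∑ j, ∑ l, min (C1 (σ j) i) (C1 (σ l) i)) := by
    intro j₀
    have hfeq : (fun j => C1 (Function.update σ j₀ ja j))
        = Function.update (fun j' => C1 (σ j')) j₀ (C1 ja) := by
      funext j
      by_cases hj : j = j₀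
      · subst hj; rw [Function.update_self, Function.update_self]
      · rw [Function.update_of_ne hj, Function.update_of_ne hj]
    have h0 := hσ (Function.update σ j₀ ja)
    rw [hfeq] at h0
    rw [rObj_eq _ (hupdnn j₀), rObj_eq _ (fun j i => hC1 (σ j) i)] at h0
    exact h0
  have hupd_apply : ∀ (j₀ j : Fin k) (i : Fin m),
      Function.update (fun j' => C1 (σ j')) j₀ (C1 ja) j i
        = Function.update (fun j' => C1 (σ j') i) j₀ (C1 ja i) j := by
    intro j₀ j i
    by_cases hj : j = j₀
    · subst hj; rw [Function.update_self, Function.update_self]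
    · rw [Function.update_of_ne hj, Function.update_of_ne hj]
  have hsum_j₀ : ∑ j₀ : Fin k, ∑ i,
        ((1/(k:ℝ)) * ∑ j, Function.update (fun j' => C1 (σ j')) j₀ (C1 ja) j i
          - (1/(2*(k:ℝ)^2)) * ∑ j, ∑ l,
              min (Function.update (fun j' => C1 (σ j')) j₀ (C1 ja) j i)
                  (Function.update (fun j' => C1 (σ j')) j₀ (C1 ja) l i))
      ≤ (k:ℝ) * ∑ i, ((1/(k:ℝ)) * ∑ j, C1 (σ j) i
          - (1/(2*(k:ℝ)^2)) * ∑ j, ∑ l, min (C1 (σ j) i) (C1 (σ l) i)) := by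
    calc ∑ j₀ : Fin k, ∑ i,
        ((1/(k:ℝ)) * ∑ j, Function.update (fun j' => C1 (σ j')) j₀ (C1 ja) j i
          - (1/(2*(k:ℝ)^2)) * ∑ j, ∑ l,
              min (Function.update (fun j' => C1 (σ j')) j₀ (C1 ja) j i)
                  (Function.update (fun j' => C1 (σ j')) j₀ (C1 ja) l i))
        ≤ ∑ j₀ : Fin k, ∑ i, ((1/(k:ℝ)) * ∑ j, C1 (σ j) i
          - (1/(2*(k:ℝ)^2)) * ∑ j, ∑ l, min (C1 (σ j) i) (C1 (σ l) i)) :=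
          Finset.sum_le_sum fun j₀ _ => hclosed j₀
      _ = (k:ℝ) * ∑ i, ((1/(k:ℝ)) * ∑ j, C1 (σ j) i
          - (1/(2*(k:ℝ)^2)) * ∑ j, ∑ l, min (C1 (σ j) i) (C1 (σ l) i)) := by
          rw [Finset.sum_const, Finset.card_univ, Fintype.card_fin, nsmul_eq_mul]
  have hLHS : ∑ j₀ : Fin k, ∑ i,
        ((1/(k:ℝ)) * ∑ j, Function.update (fun j' => C1 (σ j')) j₀ (C1 ja) j i
          - (1/(2*(k:ℝ)^2)) * ∑ j, ∑ l,
              min (Function.update (fun j' => C1 (σ j')) j₀ (C1 ja) j i)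
                  (Function.update (fun j' => C1 (σ j')) j₀ (C1 ja) l i))
      = ∑ i, ((1/(k:ℝ)) * (((k:ℝ) - 1) * ∑ j, C1 (σ j) i + (k:ℝ) * C1 ja i)
          - (1/(2*(k:ℝ)^2)) * ((k:ℝ) * C1 ja i
              + 2 * ((k:ℝ) - 1) * ∑ j, min (C1 ja i) (C1 (σ j) i)
              + ((k:ℝ) - 2) * ∑ j, ∑ l, min (C1 (σ j) i) (C1 (σ l) i)
              + ∑ j, C1 (σ j) i)) := by
    rw [Finset.sum_comm]
    refine Finset.sum_congr rfl (fun i _ => ?_)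
    have h1 : ∀ j₀ : Fin k,
        (1/(k:ℝ)) * ∑ j, Function.update (fun j' => C1 (σ j')) j₀ (C1 ja) j i
          - (1/(2*(k:ℝ)^2)) * ∑ j, ∑ l,
              min (Function.update (fun j' => C1 (σ j')) j₀ (C1 ja) j i)
                  (Function.update (fun j' => C1 (σ j')) j₀ (C1 ja) l i)
        = (1/(k:ℝ)) * ∑ j, Function.update (fun j' => C1 (σ j') i) j₀ (C1 ja i) j
          - (1/(2*(k:ℝ)^2)) * ∑ j, ∑ l,
              min (Function.update (fun j' => C1 (σ j') i) j₀ (C1 ja i) j)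
                  (Function.update (fun j' => C1 (σ j') i) j₀ (C1 ja i) l) := by
      intro j₀
      rw [Finset.sum_congr rfl (fun j (_ : j ∈ Finset.univ) => hupd_apply j₀ j i),
        Finset.sum_congr rfl (fun j (_ : j ∈ Finset.univ) =>
          Finset.sum_congr rfl (fun l (_ : l ∈ Finset.univ) => by
            rw [hupd_apply j₀ j i, hupd_apply j₀ l i]))]
    rw [Finset.sum_congr rfl (fun j₀ (_ : j₀ ∈ Finset.univ) => h1 j₀),
      Finset.sum_sub_distrib, ← Finset.mul_sum, ← Finset.mul_sum,
      sum_update_lin (fun j' => C1 (σ j') i) (C1 ja i),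
      sum_double_update (fun j' => C1 (σ j') i) (C1 ja i)]
  -- the aggregated swap inequality
  have hswap : ∑ i, (C1 ja i - (1/(k:ℝ)) * ∑ j, min (C1 ja i) (C1 (σ j) i)
        - (1/(k:ℝ)) * ∑ j, C1 (σ j) i
        + (1/(k:ℝ)^2) * ∑ j, ∑ l, min (C1 (σ j) i) (C1 (σ l) i))
      ≤ ∑ i, (C1 ja i / (2*(k:ℝ)) + (∑ j, C1 (σ j) i) / (2*(k:ℝ)^2)
        - (∑ j, min (C1 ja i) (C1 (σ j) i)) / (k:ℝ)^2) := by
    have h0 := hsum_j₀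
    rw [hLHS, Finset.mul_sum] at h0
    have hid : ∀ i : Fin m,
        (C1 ja i - (1/(k:ℝ)) * ∑ j, min (C1 ja i) (C1 (σ j) i)
          - (1/(k:ℝ)) * ∑ j, C1 (σ j) i
          + (1/(k:ℝ)^2) * ∑ j, ∑ l, min (C1 (σ j) i) (C1 (σ l) i))
        - (C1 ja i / (2*(k:ℝ)) + (∑ j, C1 (σ j) i) / (2*(k:ℝ)^2)
          - (∑ j, min (C1 ja i) (C1 (σ j) i)) / (k:ℝ)^2)
        = ((1/(k:ℝ)) * (((k:ℝ) - 1) * ∑ j, C1 (σ j) i + (k:ℝ) * C1 ja i)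
            - (1/(2*(k:ℝ)^2)) * ((k:ℝ) * C1 ja i
              + 2 * ((k:ℝ) - 1) * ∑ j, min (C1 ja i) (C1 (σ j) i)
              + ((k:ℝ) - 2) * ∑ j, ∑ l, min (C1 (σ j) i) (C1 (σ l) i)
              + ∑ j, C1 (σ j) i))
          - (k:ℝ) * ((1/(k:ℝ)) * ∑ j, C1 (σ j) i
            - (1/(2*(k:ℝ)^2)) * ∑ j, ∑ l, min (C1 (σ j) i) (C1 (σ l) i)) := by
      intro i
      field_simp
      ring
    have h2 : ∑ i, ((C1 ja i - (1/(k:ℝ)) * ∑ j, min (C1 ja i) (C1 (σ j) i)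
          - (1/(k:ℝ)) * ∑ j, C1 (σ j) i
          + (1/(k:ℝ)^2) * ∑ j, ∑ l, min (C1 (σ j) i) (C1 (σ l) i))
        - (C1 ja i / (2*(k:ℝ)) + (∑ j, C1 (σ j) i) / (2*(k:ℝ)^2)
          - (∑ j, min (C1 ja i) (C1 (σ j) i)) / (k:ℝ)^2)) ≤ 0 := by
      rw [Finset.sum_congr rfl fun i (_ : i ∈ Finset.univ) => hid i, Finset.sum_sub_distrib]
      linarith [h0]
    rw [Finset.sum_sub_distrib] at h2
    linarith [h2]
  -- bounding the error term
  have herr : ∑ i, (C1 ja i / (2*(k:ℝ)) + (∑ j, C1 (σ j) i) / (2*(k:ℝ)^2)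
        - (∑ j, min (C1 ja i) (C1 (σ j) i)) / (k:ℝ)^2)
      ≤ swR (xosVal C1) (xosVal C2) / (k:ℝ) := by
    have h1 : ∀ i : Fin m, C1 ja i / (2*(k:ℝ)) + (∑ j, C1 (σ j) i) / (2*(k:ℝ)^2)
        - (∑ j, min (C1 ja i) (C1 (σ j) i)) / (k:ℝ)^2
        ≤ C1 ja i / (2*(k:ℝ)) + (∑ j, C1 (σ j) i) / (2*(k:ℝ)^2) := by
      intro i
      have hmin : 0 ≤ ∑ j, min (C1 ja i) (C1 (σ j) i) :=
        Finset.sum_nonneg fun j _ => le_min (hC1 ja i) (hC1 (σ j) i)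
      have : 0 ≤ (∑ j, min (C1 ja i) (C1 (σ j) i)) / (k:ℝ)^2 :=
        div_nonneg hmin (by positivity)
      linarith
    have hYY : ∑ i, ∑ j, C1 (σ j) i ≤ (k:ℝ) * swR (xosVal C1) (xosVal C2) := by
      rw [Finset.sum_comm]
      calc ∑ j : Fin k, ∑ i, C1 (σ j) i
          ≤ ∑ _j : Fin k, swR (xosVal C1) (xosVal C2) := Finset.sum_le_sum fun j _ => hY j
        _ = (k:ℝ) * swR (xosVal C1) (xosVal C2) := by
            rw [Finset.sum_const, Finset.card_univ, Fintype.card_fin, nsmul_eq_mul]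
    calc ∑ i, (C1 ja i / (2*(k:ℝ)) + (∑ j, C1 (σ j) i) / (2*(k:ℝ)^2)
          - (∑ j, min (C1 ja i) (C1 (σ j) i)) / (k:ℝ)^2)
        ≤ ∑ i, (C1 ja i / (2*(k:ℝ)) + (∑ j, C1 (σ j) i) / (2*(k:ℝ)^2)) :=
          Finset.sum_le_sum fun i _ => h1 i
      _ = (∑ i, C1 ja i) / (2*(k:ℝ)) + (∑ i, ∑ j, C1 (σ j) i) / (2*(k:ℝ)^2) := by
          rw [Finset.sum_add_distrib, ← Finset.sum_div, ← Finset.sum_div]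
      _ ≤ swR (xosVal C1) (xosVal C2) / (2*(k:ℝ))
          + ((k:ℝ) * swR (xosVal C1) (xosVal C2)) / (2*(k:ℝ)^2) := by
          gcongr
      _ = swR (xosVal C1) (xosVal C2) / (k:ℝ) := by
          field_simp
          ring
  -- main chain
  have hmain : (3/4) * swR (xosVal C1) (xosVal C2) - swR (xosVal C1) (xosVal C2) / (k:ℝ)
      ≤ (1/(k:ℝ)) * ∑ j, swR (aval (C1 (σ j))) (xosVal C2) := by
    have hstar_sum : ∑ i, ((3:ℝ)/4 * max (C1 ja i) (C2 jc i))
        ≤ ∑ i, ((1/(k:ℝ)) * ∑ j, max (C1 (σ j) i) (C2 jc i))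
          + ∑ i, (C1 ja i - (1/(k:ℝ)) * ∑ j, min (C1 ja i) (C1 (σ j) i)
            - (1/(k:ℝ)) * ∑ j, C1 (σ j) i
            + (1/(k:ℝ)^2) * ∑ j, ∑ l, min (C1 (σ j) i) (C1 (σ l) i)) := by
      have h0 := Finset.sum_le_sum fun i (_ : i ∈ Finset.univ) => hstar i
      rw [Finset.sum_add_distrib] at h0
      exact h0
    have h34 : (3/4) * swR (xosVal C1) (xosVal C2)
        ≤ ∑ i, ((3:ℝ)/4 * max (C1 ja i) (C2 jc i)) := by
      rw [← Finset.mul_sum]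
      have := mul_le_mul_of_nonneg_left hOPT_le_max (by norm_num : (0:ℝ) ≤ 3/4)
      linarith
    have hWsum : ∑ i, ((1/(k:ℝ)) * ∑ j, max (C1 (σ j) i) (C2 jc i))
        ≤ (1/(k:ℝ)) * ∑ j, swR (aval (C1 (σ j))) (xosVal C2) := by
      rw [← Finset.mul_sum]
      refine mul_le_mul_of_nonneg_left ?_ (by positivity)
      rw [Finset.sum_comm]
      exact Finset.sum_le_sum fun j _ => hW j
    linarith [hswap, herr, hstar_sum, h34, hWsum]
  have hgoal1 : (1 / (k:ℝ)) * ∑ j, swR (aval (C1 (σ j))) (xosVal C2)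
      ≥ (3 / 4 - 1 / (k:ℝ)) * swR (xosVal C1) (xosVal C2) := by
    have : (3 / 4 - 1 / (k:ℝ)) * swR (xosVal C1) (xosVal C2)
        = (3/4) * swR (xosVal C1) (xosVal C2) - swR (xosVal C1) (xosVal C2) / (k:ℝ) := by
      ring
    linarith [hmain]
  refine ⟨hgoal1, ?_⟩
  by_contra hcon
  push_neg at hcon
  have hne : (Finset.univ : Finset (Fin k)).Nonempty := ⟨⟨0, hk⟩, Finset.mem_univ _⟩
  have hlt : ∑ j, swR (aval (C1 (σ j))) (xosVal C2)
      < ∑ _j : Fin k, (3 / 4 - 1 / (k:ℝ)) * swR (xosVal C1) (xosVal C2) :=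
    Finset.sum_lt_sum_of_nonempty hne fun j _ => hcon j
  rw [Finset.sum_const, Finset.card_univ, Fintype.card_fin, nsmul_eq_mul] at hlt
  have h2 : (1/(k:ℝ)) * ∑ j, swR (aval (C1 (σ j))) (xosVal C2)
      < (1/(k:ℝ)) * ((k:ℝ) * ((3 / 4 - 1 / (k:ℝ)) * swR (xosVal C1) (xosVal C2))) :=
    mul_lt_mul_of_pos_left hlt (by positivity)
  have h3 : (1/(k:ℝ)) * ((k:ℝ) * ((3 / 4 - 1 / (k:ℝ)) * swR (xosVal C1) (xosVal C2)))
      = (3 / 4 - 1 / (k:ℝ)) * swR (xosVal C1) (xosVal C2) := by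
    field_simp
  linarith [hgoal1]
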